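/- arXiv:0912.0917 — 2 statements merged into one kernel-verified Lean document; each statement's English description precedes it below -/
import Mathlib

section
/- For every natural number m ≥ 1 and every real θ with |θ| < π, the Abel limit lim_{r→1⁻} ∑_{n=1}^∞ (-1)^{n-1} n^{2m-1} sin(nθ) r^n = 0. -/
open Polynomial Complex Filter Metric

noncomputable section AbelAux

/-- Numerator polynomials: `∑' k, (-1)^k (k+1)^(n+1) z^(k+1) = z * abQ n (z) / (1+z)^(n+2)`. -/
def abQ : ℕ → Polynomial ℤ
  | 0 => 1
  | (n+1) => (1 + X) * (abQ n + X * (abQ n).derivative) - C ((n : ℤ) + 2) * (X * abQ n)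

def abq (n : ℕ) (z : ℂ) : ℂ := ((abQ n).map (Int.castRingHom ℂ)).eval z

def abG (n : ℕ) (z : ℂ) : ℂ := z * abq n z / (1 + z) ^ (n + 2)

lemma abq_hasDerivAt (n : ℕ) (z : ℂ) :
    HasDerivAt (abq n) ((((abQ n).derivative).map (Int.castRingHom ℂ)).eval z) z := by
  rw [← Polynomial.derivative_map]
  exact ((abQ n).map (Int.castRingHom ℂ)).hasDerivAt z

lemma abq_succ (n : ℕ) (z : ℂ) :
    abq (n+1) z = (1 + z) * (abq n z + z * (((abQ n).derivative).map (Int.castRingHom ℂ)).eval z)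
      - ((n : ℂ) + 2) * (z * abq n z) := by
  simp [abq, abQ]

lemma abG_hasDerivAt (n : ℕ) {z : ℂ} (hz : z ≠ -1) :
    HasDerivAt (abG n) (abq (n+1) z / (1 + z) ^ (n + 3)) z := by
  have h1 : (1 : ℂ) + z ≠ 0 := by
    intro h; apply hz; linear_combination h
  have hd : ((1 : ℂ) + z) ^ (n + 2) ≠ 0 := pow_ne_zero _ h1
  have hN : HasDerivAt (fun w : ℂ => w * abq n w)
      (abq n z + z * (((abQ n).derivative).map (Int.castRingHom ℂ)).eval z) z := by
    refine ((hasDerivAt_id z).mul (abq_hasDerivAt n z)).congr_deriv ?_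
    simp
  have hD : HasDerivAt (fun w : ℂ => (1 + w) ^ (n + 2))
      (((n : ℂ) + 2) * (1 + z) ^ (n + 1)) z := by
    have := ((hasDerivAt_id z).const_add 1).pow (n+2)
    refine this.congr_deriv ?_
    simp [mul_comm]
  have := hN.div hD hd
  refine this.congr_deriv ?_
  rw [abq_succ]
  field_simp
  ring

theorem abG_hasSum (n : ℕ) : ∀ z : ℂ, ‖z‖ < 1 →
    HasSum (fun k : ℕ => (-1) ^ k * ((k : ℂ) + 1) ^ (n + 1) * z ^ (k + 1)) (abG n z) := by
  induction n with
  | zero =>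
    intro z hz
    have h : ‖(-z)‖ < 1 := by simpa using hz
    have hS := hasSum_coe_mul_geometric_of_norm_lt_one h
    have hS1 := (hasSum_nat_add_iff' (f := fun n : ℕ => (n : ℂ) * (-z) ^ n) 1).2 hS
    simp only [Finset.range_one, Finset.sum_singleton, Nat.cast_zero, zero_mul, sub_zero] at hS1
    have hG : abG 0 z = z * 1 / (1 + z) ^ 2 := by
      simp [abG, abq, abQ]
    rw [hG]
    convert hS1.neg using 1
    · rfl
    · funext k
      rw [neg_pow z (k+1)]
      push_cast
      ring
    · rw [sub_neg_eq_add]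
      field_simp
  | succ n ih =>
    intro z₀ h₀
    set ρ : ℝ := (1 + ‖z₀‖) / 2 with hρdef
    have hρ1 : ρ < 1 := by simp only [hρdef]; linarith
    have hρ0 : 0 < ρ := by positivity
    have hz₀ρ : ‖z₀‖ < ρ := by simp only [hρdef]; linarith
    set u : ℕ → ℝ := fun k => ((k : ℝ) + 1) ^ (n + 2) * ρ ^ k with hu
    have husum : Summable u := by
      have h1 : Summable (fun k : ℕ => (k : ℝ) ^ (n + 2) * ρ ^ k) :=
        summable_pow_mul_geometric_of_norm_lt_one (n + 2)
          (by rw [Real.norm_eq_abs, abs_of_pos hρ0]; exact hρ1)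
      have h2 := (summable_nat_add_iff 1).2 h1
      have h3 := h2.mul_left ρ⁻¹
      refine h3.congr fun k => ?_
      have : (ρ : ℝ) ≠ 0 := ne_of_gt hρ0
      simp only [hu]
      push_cast
      field_simp
      ring
    set f : ℕ → ℂ → ℂ := fun k w => (-1) ^ k * ((k : ℂ) + 1) ^ (n + 1) * w ^ (k + 1) with hf
    set f' : ℕ → ℂ → ℂ := fun k w => (-1) ^ k * ((k : ℂ) + 1) ^ (n + 2) * w ^ k with hf'
    have hder : ∀ k w, w ∈ ball (0 : ℂ) ρ → HasDerivAt (f k) (f' k w) w := by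
      intro k w _
      have := (hasDerivAt_pow (k + 1) w).const_mul ((-1 : ℂ) ^ k * ((k : ℂ) + 1) ^ (n + 1))
      refine this.congr_deriv ?_
      simp only [hf']
      push_cast
      ring
    have hbound : ∀ k w, w ∈ ball (0 : ℂ) ρ → ‖f' k w‖ ≤ u k := by
      intro k w hw
      rw [mem_ball, dist_zero_right] at hw
      simp only [hf', hu, norm_mul, norm_pow, norm_neg, norm_one, one_pow, one_mul]
      have h1 : ‖(k : ℂ) + 1‖ = (k : ℝ) + 1 := by
        rw [show ((k : ℂ) + 1) = ((k + 1 : ℕ) : ℂ) by push_cast; ring]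
        rw [Complex.norm_natCast]
        push_cast
        try ring
      rw [h1]
      gcongr
      try exact le_of_lt hw
    have hmem : z₀ ∈ ball (0 : ℂ) ρ := by rwa [mem_ball, dist_zero_right]
    have hsum0 : Summable fun k => f k z₀ := (ih z₀ h₀).summable
    have hDF : HasDerivAt (fun w => ∑' k, f k w) (∑' k, f' k z₀) z₀ :=
      hasDerivAt_tsum_of_isPreconnected husum isOpen_ball (convex_ball _ _).isPreconnected
        hder hbound hmem hsum0 hmem
    have hEq : (fun w => ∑' k, f k w) =ᶠ[nhds z₀] abG n := by
      filter_upwards [isOpen_ball.mem_nhds (show z₀ ∈ ball (0:ℂ) 1 by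
        rwa [mem_ball, dist_zero_right])] with w hw
      rw [mem_ball, dist_zero_right] at hw
      exact (ih w hw).tsum_eq
    have hz₀ne : z₀ ≠ -1 := by
      intro h; rw [h] at h₀; simp at h₀
    have hDG := abG_hasDerivAt n hz₀ne
    have hDF' : HasDerivAt (abG n) (∑' k, f' k z₀) z₀ := hDF.congr_of_eventuallyEq hEq.symm
    have hkey : (∑' k, f' k z₀) = abq (n+1) z₀ / (1 + z₀) ^ (n + 3) := hDF'.unique hDG
    have hsum' : Summable (fun k => f' k z₀) :=
      Summable.of_norm_bounded husum fun k => hbound k z₀ hmem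
    have hS : HasSum (fun k => f' k z₀) (abq (n+1) z₀ / (1 + z₀) ^ (n + 3)) := by
      rw [← hkey]; exact hsum'.hasSum
    have := hS.mul_left z₀
    convert this using 1
    · rfl
    · funext k
      simp only [hf']
      ring
    · simp only [abG]
      ring

theorem abG_inv (n : ℕ) : ∀ z : ℂ, z ≠ 0 → z ≠ -1 →
    abG n z⁻¹ = (-1) ^ n * abG n z := by
  induction n with
  | zero =>
    intro z hz0 hz1
    have h1 : (1 : ℂ) + z ≠ 0 := fun h => hz1 (by linear_combination h)
    have h1inv : (1 : ℂ) + z⁻¹ ≠ 0 := by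
      intro h
      apply hz1
      have : z⁻¹ = -1 := by linear_combination h
      rw [← inv_inv z, this]; norm_num
    simp only [abG, abq, abQ, Polynomial.map_one, Polynomial.eval_one, pow_zero, one_mul]
    rw [div_eq_div_iff (pow_ne_zero 2 h1inv) (pow_ne_zero 2 h1)]
    field_simp
    ring
  | succ n ih =>
    intro z hz0 hz1
    have hinv0 : z⁻¹ ≠ 0 := inv_ne_zero hz0
    have hinv1 : z⁻¹ ≠ -1 := by
      intro h
      apply hz1
      rw [← inv_inv z, h]
      norm_num
    have h1z : (1 : ℂ) + z ≠ 0 := fun h => hz1 (by linear_combination h)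
    have hd1 : HasDerivAt (abG n) (abq (n+1) z⁻¹ / (1 + z⁻¹) ^ (n + 3)) z⁻¹ :=
      abG_hasDerivAt n hinv1
    have hd2 : HasDerivAt (fun w : ℂ => abG n w⁻¹)
        (abq (n+1) z⁻¹ / (1 + z⁻¹) ^ (n + 3) * (-(z ^ 2)⁻¹)) z :=
      hd1.comp z (hasDerivAt_inv hz0)
    have hopen : IsOpen {w : ℂ | w ≠ 0 ∧ w ≠ -1} := by
      have : {w : ℂ | w ≠ 0 ∧ w ≠ -1} = {(0 : ℂ)}ᶜ ∩ {(-1 : ℂ)}ᶜ := by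
        ext w; simp [Set.mem_setOf_eq]
      rw [this]
      exact isOpen_compl_singleton.inter isOpen_compl_singleton
    have hEq : (fun w : ℂ => abG n w⁻¹) =ᶠ[nhds z] fun w => (-1) ^ n * abG n w := by
      filter_upwards [hopen.mem_nhds ⟨hz0, hz1⟩] with w hw
      exact ih w hw.1 hw.2
    have hd3 : HasDerivAt (fun w : ℂ => (-1 : ℂ) ^ n * abG n w)
        (abq (n+1) z⁻¹ / (1 + z⁻¹) ^ (n + 3) * (-(z ^ 2)⁻¹)) z :=
      hd2.congr_of_eventuallyEq hEq.symm
    have hd4 : HasDerivAt (fun w : ℂ => (-1 : ℂ) ^ n * abG n w)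
        ((-1) ^ n * (abq (n+1) z / (1 + z) ^ (n + 3))) z :=
      (abG_hasDerivAt n hz1).const_mul _
    have hkey := hd3.unique hd4
    have hz2 : (z ^ 2 : ℂ) ≠ 0 := pow_ne_zero _ hz0
    have hkey2 : abq (n+1) z⁻¹ / (1 + z⁻¹) ^ (n + 3)
        = (-1) ^ (n+1) * z ^ 2 * (abq (n+1) z / (1 + z) ^ (n + 3)) := by
      calc abq (n+1) z⁻¹ / (1 + z⁻¹) ^ (n + 3)
          = abq (n+1) z⁻¹ / (1 + z⁻¹) ^ (n + 3) * ((z ^ 2)⁻¹ * z ^ 2) := by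
            rw [inv_mul_cancel₀ hz2, mul_one]
        _ = (abq (n+1) z⁻¹ / (1 + z⁻¹) ^ (n + 3) * -(z ^ 2)⁻¹) * -(z ^ 2) := by ring
        _ = ((-1) ^ n * (abq (n+1) z / (1 + z) ^ (n + 3))) * -(z ^ 2) := by rw [hkey]
        _ = (-1) ^ (n+1) * z ^ 2 * (abq (n+1) z / (1 + z) ^ (n + 3)) := by ring
    have hc : z⁻¹ * z ^ 2 = z := by
      rw [sq, ← mul_assoc, inv_mul_cancel₀ hz0, one_mul]
    show z⁻¹ * abq (n+1) z⁻¹ / (1 + z⁻¹) ^ (n + 3)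
        = (-1) ^ (n+1) * (z * abq (n+1) z / (1 + z) ^ (n + 3))
    rw [mul_div_assoc, hkey2]
    linear_combination ((-1 : ℂ)) ^ (n+1) * (abq (n+1) z / (1 + z) ^ (n + 3)) * hc

lemma abq_conj (n : ℕ) (z : ℂ) :
    (starRingEnd ℂ) (abq n z) = abq n ((starRingEnd ℂ) z) := by
  simp only [abq, Polynomial.eval_map]
  rw [Polynomial.hom_eval₂]
  congr 1
  exact Subsingleton.elim _ _

lemma abG_conj (n : ℕ) (z : ℂ) :
    (starRingEnd ℂ) (abG n z) = abG n ((starRingEnd ℂ) z) := by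
  simp only [abG, map_div₀, map_mul, map_pow, map_add, map_one, abq_conj]

end AbelAux

/-- Abel summation: `lim_{r→1⁻} ∑_{n=1}^∞ (-1)^{n-1} n^{2m-1} sin(nθ) r^n = 0`
for `|θ| < π`. The sum over `n ≥ 1` is indexed by `n = k + 1`. -/
theorem abel_sum_sin (m : ℕ) (hm : 1 ≤ m) (θ : ℝ) (hθ : |θ| < Real.pi) :
    Filter.Tendsto
      (fun r : ℝ => ∑' k : ℕ,
        (-1) ^ k * ((k : ℝ) + 1) ^ (2 * m - 1) * Real.sin (((k : ℝ) + 1) * θ) * r ^ (k + 1))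
      (nhdsWithin 1 (Set.Iio 1)) (nhds 0) := by
  have hθ' := abs_lt.1 hθ
  set n : ℕ := 2 * (m - 1) with hndef
  have hn : 2 * m - 1 = n + 1 := by omega
  have hneven : Even n := ⟨m - 1, by omega⟩
  set z : ℂ := Complex.exp (θ * Complex.I) with hzdef
  have hz0 : z ≠ 0 := Complex.exp_ne_zero _
  have hcos : Real.cos θ ≠ -1 := by
    have h2 : Real.cos (θ / 2) > 0 := by
      apply Real.cos_pos_of_mem_Ioo
      constructor <;> [linarith [hθ'.1]; linarith [hθ'.2]]
    have h3 := Real.cos_sq (θ / 2)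
    rw [show 2 * (θ / 2) = θ by ring] at h3
    intro h
    rw [h] at h3
    nlinarith
  have hz1 : z ≠ -1 := by
    intro h
    apply hcos
    have : (z).re = (-1 : ℂ).re := by rw [h]
    simpa [hzdef, Complex.exp_ofReal_mul_I_re] using this
  have hznorm : ‖z‖ = 1 := by
    simp [hzdef, Complex.norm_exp_ofReal_mul_I]
  have hconj : (starRingEnd ℂ) z = z⁻¹ := by
    rw [hzdef, ← Complex.exp_conj, ← Complex.exp_neg]
    congr 1
    simp [Complex.conj_I]
  have him : (abG n z).im = 0 := by
    have h1 : (starRingEnd ℂ) (abG n z) = abG n z := by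
      rw [abG_conj, hconj, abG_inv n z hz0 hz1, hneven.neg_one_pow, one_mul]
    exact Complex.conj_eq_iff_im.1 h1
  -- pointwise identification of the real series with the imaginary part
  have hterm : ∀ r : ℝ, |r| < 1 →
      (∑' k : ℕ, (-1) ^ k * ((k : ℝ) + 1) ^ (2 * m - 1) * Real.sin (((k : ℝ) + 1) * θ)
        * r ^ (k + 1)) = (abG n ((r : ℂ) * z)).im := by
    intro r hr
    have hwnorm : ‖(r : ℂ) * z‖ < 1 := by
      rw [norm_mul, hznorm, mul_one, Complex.norm_real, Real.norm_eq_abs]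
      exact hr
    have hS := abG_hasSum n ((r : ℂ) * z) hwnorm
    have hSim := Complex.imCLM.hasSum hS
    have heq : ∀ k : ℕ,
        Complex.imCLM ((-1) ^ k * ((k : ℂ) + 1) ^ (n + 1) * ((r : ℂ) * z) ^ (k + 1))
        = (-1) ^ k * ((k : ℝ) + 1) ^ (2 * m - 1) * Real.sin (((k : ℝ) + 1) * θ)
          * r ^ (k + 1) := by
      intro k
      have e1 : (-1 : ℂ) ^ k * ((k : ℂ) + 1) ^ (n + 1) * ((r : ℂ) * z) ^ (k + 1)
          = (((-1 : ℝ) ^ k * ((k : ℝ) + 1) ^ (n + 1) * r ^ (k + 1) : ℝ) : ℂ)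
            * Complex.exp ((((k : ℝ) + 1) * θ : ℝ) * Complex.I) := by
        rw [hzdef, mul_pow, ← Complex.exp_nat_mul]
        push_cast
        ring_nf
      rw [show Complex.imCLM ((-1) ^ k * ((k : ℂ) + 1) ^ (n + 1) * ((r : ℂ) * z) ^ (k + 1))
          = ((-1 : ℂ) ^ k * ((k : ℂ) + 1) ^ (n + 1) * ((r : ℂ) * z) ^ (k + 1)).im from rfl]
      rw [e1, Complex.im_ofReal_mul, Complex.exp_ofReal_mul_I_im, hn]
      ring
    rw [show (abG n ((r : ℂ) * z)).im = Complex.imCLM (abG n ((r : ℂ) * z)) from rfl]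
    rw [← hSim.tsum_eq]
    exact tsum_congr fun k => (heq k).symm
  -- the limit of the imaginary part
  have hcont : Filter.Tendsto (fun r : ℝ => (abG n ((r : ℂ) * z)).im)
      (nhdsWithin 1 (Set.Iio 1)) (nhds 0) := by
    have h1z : (1 : ℂ) + z ≠ 0 := fun h => hz1 (by linear_combination h)
    have hGcont : ContinuousAt (abG n) z := by
      apply ContinuousAt.div
      · exact (continuous_id.mul (((abQ n).map (Int.castRingHom ℂ)).continuous)).continuousAt
      · fun_prop
      · exact pow_ne_zero _ h1z
    have hinner : ContinuousAt (fun r : ℝ => (r : ℂ) * z) 1 := by fun_prop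
    have t1 : Filter.Tendsto (fun r : ℝ => (r : ℂ) * z) (nhds 1) (nhds z) := by
      simpa using hinner.tendsto
    have t3 : Filter.Tendsto (fun r : ℝ => abG n ((r : ℂ) * z)) (nhds 1) (nhds (abG n z)) :=
      hGcont.tendsto.comp t1
    have t4 : Filter.Tendsto (fun r : ℝ => (abG n ((r : ℂ) * z)).im) (nhds 1)
        (nhds ((abG n z).im)) := (Complex.continuous_im.continuousAt.tendsto).comp t3
    have t5 := t4.mono_left (nhdsWithin_le_nhds (s := Set.Iio (1 : ℝ)))
    rwa [him] at t5
  refine Filter.Tendsto.congr' ?_ hcont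
  have hmem : ∀ᶠ r in nhdsWithin (1 : ℝ) (Set.Iio 1), |r| < 1 := by
    filter_upwards [self_mem_nhdsWithin,
      ((eventually_gt_nhds (show (-1 : ℝ) < 1 by norm_num)).filter_mono nhdsWithin_le_nhds)]
      with r hr1 hr2
    rw [abs_lt]
    exact ⟨hr2, hr1⟩
  filter_upwards [hmem] with r hr
  exact (hterm r hr).symm
end

section
/- For every natural number m ≥ 1, lim_{r→1⁻} ∑_{n=1}^∞ (-1)^{n-1} (2n-1)^{2m-1} r^n = 0. -/
open Finset

def pcoef : ℕ → ℕ → ℤ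
  | 0, 0 => 1
  | 0, _ + 1 => 0
  | n + 1, 0 => pcoef n 0
  | n + 1, i + 1 => (2 * (i : ℤ) + 3) * pcoef n (i + 1) - (2 * ((n : ℤ) - i) + 1) * pcoef n i

lemma pcoef_eq_zero : ∀ n i, n < i → pcoef n i = 0 := by
  intro n
  induction n with
  | zero => intro i hi; match i, hi with
    | i + 1, _ => rfl
  | succ n ih =>
    intro i hi
    match i, hi with
    | i + 1, hi =>
      have h1 : pcoef n (i + 1) = 0 := ih _ (by omega)
      have h2 : pcoef n i = 0 := ih _ (by omega)
      show (2 * (i : ℤ) + 3) * pcoef n (i + 1) - (2 * ((n : ℤ) - i) + 1) * pcoef n i = 0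
      rw [h1, h2]; ring

lemma bracket (n a k : ℕ) :
    (2 * ((n : ℤ) - a) + 1) * ((k + (a + 1)).choose (n + 1) : ℤ)
      + (2 * a + 1) * ((k + a).choose (n + 1) : ℤ)
      = (2 * k + 1) * ((k + a).choose n : ℤ) := by
  have pascal : ((k + (a + 1)).choose (n + 1) : ℤ)
      = ((k + a).choose n : ℤ) + ((k + a).choose (n + 1) : ℤ) := by
    have : k + (a + 1) = (k + a) + 1 := by omega
    rw [this, Nat.choose_succ_succ' (k + a) n]
    push_cast; ring
  have hcr := Nat.choose_succ_right_eq (k + a) n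
  rcases le_or_gt n (k + a) with h | h
  · have : ((k + a).choose (n + 1) : ℤ) * (n + 1)
        = ((k + a).choose n : ℤ) * ((k : ℤ) + a - n) := by
      have := congrArg (Nat.cast : ℕ → ℤ) hcr
      push_cast [h] at this
      convert this using 2
    rw [pascal]
    nlinarith [this]
  · have h1 : ((k + a).choose (n + 1) : ℤ) = 0 := by
      norm_cast; exact Nat.choose_eq_zero_of_lt (by omega)
    have h2 : ((k + a).choose n : ℤ) = 0 := by
      norm_cast; exact Nat.choose_eq_zero_of_lt h
    rw [pascal, h1, h2]; ring

lemma pcoef_key (n k : ℕ) :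
    ∑ i ∈ range (n + 1), (-1 : ℤ) ^ i * pcoef n i * ((k + (n - i)).choose n : ℤ)
      = (2 * (k : ℤ) + 1) ^ n := by
  induction n generalizing k with
  | zero => simp [pcoef]
  | succ n ih =>
    set d : ℕ → ℤ := fun j =>
      (-1 : ℤ) ^ j * (2 * (j : ℤ) + 1) * pcoef n j * ((k + (n + 1 - j)).choose (n + 1) : ℤ)
      with hd
    have step1 : ∑ i ∈ range (n + 1 + 1),
        (-1 : ℤ) ^ i * pcoef (n + 1) i * ((k + (n + 1 - i)).choose (n + 1) : ℤ)
        = ∑ i ∈ range (n + 1),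
            ((-1 : ℤ) ^ i * pcoef n i * ((2 * ((n : ℤ) - i) + 1)
              * ((k + (n - i)).choose (n + 1) : ℤ)) + d (i + 1))
          + d 0 := by
      rw [Finset.sum_range_succ']
      congr 1
      apply Finset.sum_congr rfl
      intro i hi
      have hni : n + 1 - (i + 1) = n - i := by omega
      show (-1 : ℤ) ^ (i + 1) * pcoef (n + 1) (i + 1) * _ = _
      rw [hni]
      show (-1 : ℤ) ^ (i + 1)
          * ((2 * (i : ℤ) + 3) * pcoef n (i + 1) - (2 * ((n : ℤ) - i) + 1) * pcoef n i) * _ = _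
      rw [hd]
      have hni2 : n + 1 - (i + 1) = n - i := by omega
      simp only [hni2]
      push_cast
      ring
    have step2 : ∑ i ∈ range (n + 1), d (i + 1) + d 0 = ∑ i ∈ range (n + 1), d i := by
      have hd0 : d (n + 1) = 0 := by
        rw [hd]; simp [pcoef_eq_zero n (n + 1) (by omega)]
      rw [Finset.sum_range_succ, hd0,
        show (∑ i ∈ range (n + 1), d i) = ∑ i ∈ range n, d (i + 1) + d 0 from
          Finset.sum_range_succ' d n]
      ring
    calc ∑ i ∈ range (n + 1 + 1),
        (-1 : ℤ) ^ i * pcoef (n + 1) i * ((k + (n + 1 - i)).choose (n + 1) : ℤ)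
        = ∑ i ∈ range (n + 1),
            ((-1 : ℤ) ^ i * pcoef n i * ((2 * ((n : ℤ) - i) + 1)
              * ((k + (n - i)).choose (n + 1) : ℤ)))
          + (∑ i ∈ range (n + 1), d (i + 1) + d 0) := by
            rw [step1, Finset.sum_add_distrib]; ring
      _ = ∑ i ∈ range (n + 1),
            ((-1 : ℤ) ^ i * pcoef n i * ((2 * ((n : ℤ) - i) + 1)
              * ((k + (n - i)).choose (n + 1) : ℤ) + (2 * (i : ℤ) + 1)
              * ((k + (n + 1 - i)).choose (n + 1) : ℤ))) := by
            rw [step2, ← Finset.sum_add_distrib]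
            apply Finset.sum_congr rfl
            intro i hi
            rw [hd]; ring
      _ = (2 * (k : ℤ) + 1) * ∑ i ∈ range (n + 1),
            (-1 : ℤ) ^ i * pcoef n i * ((k + (n - i)).choose n : ℤ) := by
            rw [Finset.mul_sum]
            apply Finset.sum_congr rfl
            intro i hi
            simp only [Finset.mem_range] at hi
            have ha : n + 1 - i = (n - i) + 1 := by omega
            have hna : ((n : ℤ) - i) = ((n - i : ℕ) : ℤ) := by
              have : i ≤ n := by omega
              push_cast [this]; ring
            rw [ha, hna]
            have hin : ((n : ℤ) - ((n - i : ℕ) : ℤ)) = (i : ℤ) := by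
              have : i ≤ n := by omega
              push_cast [this]; ring
            have hb := bracket n (n - i) k
            rw [hin] at hb
            linear_combination ((-1 : ℤ) ^ i * pcoef n i) * hb
      _ = (2 * (k : ℤ) + 1) ^ (n + 1) := by rw [ih k]; ring

lemma pcoef_palindrome : ∀ n, ∀ i ≤ n, pcoef n i = (-1) ^ n * pcoef n (n - i) := by
  intro n
  induction n with
  | zero => intro i hi; interval_cases i; simp
  | succ n ih =>
    intro i hi
    match i, hi with
    | 0, _ =>
      have h1 : pcoef n (n + 1) = 0 := pcoef_eq_zero n (n + 1) (by omega)
      show pcoef n 0 = (-1) ^ (n + 1) * pcoef (n + 1) (n + 1 - 0)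
      have : n + 1 - 0 = n + 1 := rfl
      rw [this]
      show pcoef n 0 = (-1) ^ (n + 1) *
        ((2 * (n : ℤ) + 3) * pcoef n (n + 1) - (2 * ((n : ℤ) - n) + 1) * pcoef n n)
      rw [h1, ih 0 (by omega)]
      have : n - 0 = n := rfl
      rw [this]; ring
    | j + 1, hi =>
      show (2 * (j : ℤ) + 3) * pcoef n (j + 1) - (2 * ((n : ℤ) - j) + 1) * pcoef n j
        = (-1) ^ (n + 1) * pcoef (n + 1) (n + 1 - (j + 1))
      have hj : j ≤ n := by omega
      rcases Nat.eq_or_lt_of_le hj with hjn | hjn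
      · -- j = n
        subst hjn
        have h1 : pcoef j (j + 1) = 0 := pcoef_eq_zero j (j + 1) (by omega)
        have h2 : j + 1 - (j + 1) = 0 := by omega
        rw [h2]
        show (2 * (j : ℤ) + 3) * pcoef j (j + 1) - (2 * ((j : ℤ) - j) + 1) * pcoef j j
          = (-1) ^ (j + 1) * pcoef j 0
        rw [h1, ih 0 (by omega)]
        have : j - 0 = j := rfl
        rw [this]
        have hs1 : (-1 : ℤ) ^ (j + 1) * (-1) ^ j = -1 := by
          rw [← pow_add, show j + 1 + j = 2 * j + 1 by omega, pow_succ, pow_mul]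
          norm_num
        linear_combination (-(pcoef j j)) * hs1
      · -- j < n, so n - (j+1) = t, n + 1 - (j + 1) = t + 1 with t = n - j - 1
        obtain ⟨t, ht⟩ : ∃ t, n - (j + 1) = t := ⟨_, rfl⟩
        have h2 : n + 1 - (j + 1) = t + 1 := by omega
        rw [h2]
        show _ = (-1 : ℤ) ^ (n + 1) *
          ((2 * (t : ℤ) + 3) * pcoef n (t + 1) - (2 * ((n : ℤ) - t) + 1) * pcoef n t)
        have hs : (-1 : ℤ) ^ n * (-1) ^ n = 1 := by
          rw [← pow_add, show n + n = 2 * n by omega, pow_mul]; norm_num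
        have e1 : pcoef n (t + 1) = (-1) ^ n * pcoef n j := by
          rw [show t + 1 = n - j by omega, ih j (by omega), ← mul_assoc, hs, one_mul]
        have e2 : pcoef n t = (-1) ^ n * pcoef n (j + 1) := by
          rw [show t = n - (j + 1) by omega, ih (j + 1) (by omega), ← mul_assoc, hs, one_mul]
        rw [e1, e2]
        have c1 : (2 * (t : ℤ) + 3) = 2 * ((n : ℤ) - j) + 1 := by
          have : (t : ℤ) = (n : ℤ) - j - 1 := by
            have := ht; omega
          rw [this]; ring
        have c2 : (2 * ((n : ℤ) - t) + 1) = 2 * (j : ℤ) + 3 := by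
          have : (t : ℤ) = (n : ℤ) - j - 1 := by
            have := ht; omega
          rw [this]; ring
        rw [c1, c2]
        have hs1 : (-1 : ℤ) ^ (n + 1) * (-1) ^ n = -1 := by
          rw [← pow_add, show n + 1 + n = 2 * n + 1 by omega, pow_succ, pow_mul]
          norm_num
        linear_combination ((2 * ((n : ℤ) - j) + 1) * pcoef n (j + 1)
          - (2 * (j : ℤ) + 3) * pcoef n j) * hs1
          - (pcoef n j + pcoef n (j + 1)) * (4 * (j : ℤ) + 2 - 2 * n) * hs

lemma pcoef_sum_eq_zero {n : ℕ} (hn : Odd n) :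
    ∑ i ∈ range (n + 1), pcoef n i = 0 := by
  have h1 : ∑ i ∈ range (n + 1), pcoef n i
      = (-1) ^ n * ∑ i ∈ range (n + 1), pcoef n (n - i) := by
    rw [Finset.mul_sum]
    apply Finset.sum_congr rfl
    intro i hi
    simp only [Finset.mem_range] at hi
    exact pcoef_palindrome n i (by omega)
  have h2 : ∑ i ∈ range (n + 1), pcoef n (n - i) = ∑ i ∈ range (n + 1), pcoef n i := by
    rw [← Finset.sum_range_reflect]
    apply Finset.sum_congr rfl
    intro i hi
    simp only [Finset.mem_range] at hi
    congr 1
    omega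
  rw [h2, hn.neg_one_pow] at h1
  omega

lemma hasSum_S (n : ℕ) {r : ℝ} (hr : |r| < 1) :
    HasSum (fun k : ℕ => (-1) ^ k * (2 * (k : ℝ) + 1) ^ n * r ^ k)
      ((∑ i ∈ range (n + 1), (pcoef n i : ℝ) * r ^ i) / (1 + r) ^ (n + 1)) := by
  have hx : ‖(-r)‖ < 1 := by simpa [Real.norm_eq_abs, abs_neg] using hr
  have base : HasSum (fun k : ℕ => ((k + n).choose n : ℝ) * (-r) ^ k)
      (1 / (1 + r) ^ (n + 1)) := by
    have := hasSum_choose_mul_geometric_of_norm_lt_one n hx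
    rwa [sub_neg_eq_add] at this
  have shifted : ∀ i ≤ n, HasSum (fun k : ℕ => (((k + (n - i)).choose n : ℝ)) * (-r) ^ k)
      ((-r) ^ i * (1 / (1 + r) ^ (n + 1))) := by
    intro i hi
    have h1 := base.mul_right ((-r) ^ i)
    have h3 : HasSum (fun k : ℕ => (((k + i + (n - i)).choose n : ℝ)) * (-r) ^ (k + i))
        (1 / (1 + r) ^ (n + 1) * (-r) ^ i) := by
      refine h1.congr_fun fun k => ?_
      rw [show k + i + (n - i) = k + n by omega, pow_add]
      ring
    have h4 := (hasSum_nat_add_iff (f := fun k : ℕ => (((k + (n - i)).choose n : ℝ)) * (-r) ^ k) i).mp h3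
    have h5 : ∑ j ∈ range i, (((j + (n - i)).choose n : ℝ)) * (-r) ^ j = 0 := by
      apply Finset.sum_eq_zero
      intro j hj
      simp only [Finset.mem_range] at hj
      have : (j + (n - i)).choose n = 0 := Nat.choose_eq_zero_of_lt (by omega)
      rw [this]; simp
    rw [h5, add_zero] at h4
    rw [mul_comm ((-r) ^ i)]
    exact h4
  have combined : HasSum
      (fun k : ℕ => ∑ i ∈ range (n + 1),
        ((-1 : ℝ) ^ i * (pcoef n i : ℝ)) * ((((k + (n - i)).choose n : ℝ)) * (-r) ^ k))
      (∑ i ∈ range (n + 1),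
        ((-1 : ℝ) ^ i * (pcoef n i : ℝ)) * ((-r) ^ i * (1 / (1 + r) ^ (n + 1)))) := by
    apply hasSum_sum
    intro i hi
    simp only [Finset.mem_range] at hi
    exact (shifted i (by omega)).mul_left _
  have funeq : ∀ k : ℕ, ∑ i ∈ range (n + 1),
      ((-1 : ℝ) ^ i * (pcoef n i : ℝ)) * ((((k + (n - i)).choose n : ℝ)) * (-r) ^ k)
      = (-1) ^ k * (2 * (k : ℝ) + 1) ^ n * r ^ k := by
    intro k
    have key := congrArg (Int.cast : ℤ → ℝ) (pcoef_key n k)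
    push_cast at key
    calc ∑ i ∈ range (n + 1),
        ((-1 : ℝ) ^ i * (pcoef n i : ℝ)) * ((((k + (n - i)).choose n : ℝ)) * (-r) ^ k)
        = (∑ i ∈ range (n + 1),
            (-1 : ℝ) ^ i * (pcoef n i : ℝ) * (((k + (n - i)).choose n : ℝ))) * (-r) ^ k := by
          rw [Finset.sum_mul]
          apply Finset.sum_congr rfl
          intro i _; ring
      _ = (2 * (k : ℝ) + 1) ^ n * (-r) ^ k := by rw [key]
      _ = (-1) ^ k * (2 * (k : ℝ) + 1) ^ n * r ^ k := by
          rw [neg_pow]; ring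
  have valeq : ∑ i ∈ range (n + 1),
      ((-1 : ℝ) ^ i * (pcoef n i : ℝ)) * ((-r) ^ i * (1 / (1 + r) ^ (n + 1)))
      = (∑ i ∈ range (n + 1), (pcoef n i : ℝ) * r ^ i) / (1 + r) ^ (n + 1) := by
    rw [Finset.sum_div]
    apply Finset.sum_congr rfl
    intro i _
    rw [neg_pow]
    have : (-1 : ℝ) ^ i * (-1) ^ i = 1 := by
      rw [← pow_add, show i + i = 2 * i by omega, pow_mul]; norm_num
    linear_combination ((pcoef n i : ℝ) * r ^ i / (1 + r) ^ (n + 1)) * this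
  rw [← valeq]
  exact combined.congr_fun fun k => (funeq k).symm

/-- Abel summability of `1^{2m-1} - 3^{2m-1} + 5^{2m-1} - ⋯` to `0`.
The sum over `n ≥ 1` is indexed by `n = k + 1`, `(-1)^{n-1} = (-1)^k`,
`2n - 1 = 2k + 1`. -/
theorem abel_sum_odd_powers (m : ℕ) (hm : 1 ≤ m) :
    Filter.Tendsto
      (fun r : ℝ => ∑' k : ℕ, (-1) ^ k * (2 * (k : ℝ) + 1) ^ (2 * m - 1) * r ^ (k + 1))
      (nhdsWithin 1 (Set.Iio 1)) (nhds 0) := by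
  set n := 2 * m - 1 with hn
  have hodd : Odd n := ⟨m - 1, by omega⟩
  set P : ℝ → ℝ := fun r =>
    (∑ i ∈ range (n + 1), (pcoef n i : ℝ) * r ^ i) / (1 + r) ^ (n + 1) * r with hP
  have heq : ∀ r ∈ Set.Ioo (0 : ℝ) 1,
      (∑' k : ℕ, (-1) ^ k * (2 * (k : ℝ) + 1) ^ n * r ^ (k + 1)) = P r := by
    intro r hr
    have habs : |r| < 1 := abs_lt.2 ⟨by linarith [hr.1], hr.2⟩
    have h := (hasSum_S n habs).mul_right r
    have h2 : HasSum (fun k : ℕ => (-1) ^ k * (2 * (k : ℝ) + 1) ^ n * r ^ (k + 1)) (P r) := by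
      refine h.congr_fun fun k => ?_
      rw [pow_succ]; ring
    exact h2.tsum_eq
  have hsum0 : (∑ i ∈ range (n + 1), (pcoef n i : ℝ) * (1 : ℝ) ^ i) = 0 := by
    have := pcoef_sum_eq_zero hodd
    have h2 := congrArg (Int.cast : ℤ → ℝ) this
    push_cast at h2
    simpa [one_pow] using h2
  have hcont : Filter.Tendsto P (nhds 1) (nhds 0) := by
    have c1 : ContinuousAt (fun r : ℝ => ∑ i ∈ range (n + 1), (pcoef n i : ℝ) * r ^ i) 1 :=
      (continuous_finset_sum _ fun i _ => continuous_const.mul (continuous_pow i)).continuousAt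
    have c2 : ContinuousAt (fun r : ℝ => (1 + r) ^ (n + 1)) 1 :=
      ((continuous_const.add continuous_id).pow (n + 1)).continuousAt
    have hden : ((1 : ℝ) + 1) ^ (n + 1) ≠ 0 := by positivity
    have : ContinuousAt P 1 := ((c1.div c2 hden).mul continuousAt_id)
    have h0 : P 1 = 0 := by
      rw [hP]; simp only [hsum0]; simp
    simpa [h0] using this.tendsto
  have hmem : Set.Ioo (0 : ℝ) 1 ∈ nhdsWithin 1 (Set.Iio 1) :=
    Ioo_mem_nhdsLT_of_mem (by norm_num : (1 : ℝ) ∈ Set.Ioc 0 1)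
  refine Filter.Tendsto.congr' ?_ (hcont.mono_left nhdsWithin_le_nhds)
  filter_upwards [hmem] with r hr
  exact (heq r hr).symm
end
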